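/- Let G = (V, E) be a finite connected weighted graph with nonnegative edge weights w, let T ⊆ V with |T| ≥ 2, and let s, d ∈ T. Then for every walk in G that starts at s, ends at d, and visits every vertex of T at least once, the total weight of the walk is at least the minimum total weight of a spanning tree of the metric completion of T. -/

import Mathlib

open SimpleGraph

/-- A spanning tree of `G` is a subgraph of `G` (on the same vertex set) that is a tree. -/
def IsSpanningTree {V : Type*} (G H : SimpleGraph V) : Prop :=
  H ≤ G ∧ H.IsTree

/-- The total weight of (the edges of) a graph `H` with edge-weight function `w`. -/
noncomputable def treeWeight {V : Type*} [Finite V] (H : SimpleGraph V)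
    (w : Sym2 V → ℝ) : ℝ :=
  ∑ e ∈ (Set.toFinite H.edgeSet).toFinset, w e

/-- `H` is a minimum spanning tree of the weighted graph `(G, w)`. -/
def IsMST {V : Type*} [Finite V] (G : SimpleGraph V) (w : Sym2 V → ℝ)
    (H : SimpleGraph V) : Prop :=
  IsSpanningTree G H ∧ ∀ H', IsSpanningTree G H' → treeWeight H w ≤ treeWeight H' w

/-- Weighted graph distance: the minimum (infimum) total weight of a walk from `u` to
`v` in `G`. -/
noncomputable def wdist {V : Type*} (G : SimpleGraph V) (w : Sym2 V → ℝ) (u v : V) : ℝ :=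
  sInf {x | ∃ p : G.Walk u v, x = (p.edges.map w).sum}

section Aux
variable {V : Type*} {G : SimpleGraph V} {w : Sym2 V → ℝ}

lemma walkWeight_nonneg (hw : ∀ e, 0 ≤ w e) {u v : V} (p : G.Walk u v) :
    0 ≤ (p.edges.map w).sum := by
  apply List.sum_nonneg; intro x hx
  obtain ⟨e, _, rfl⟩ := List.mem_map.mp hx; exact hw e

lemma wdist_bddBelow (hw : ∀ e, 0 ≤ w e) (u v : V) :
    BddBelow {x | ∃ p : G.Walk u v, x = (p.edges.map w).sum} :=
  ⟨0, by rintro x ⟨p, rfl⟩; exact walkWeight_nonneg hw p⟩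

lemma wdist_set_nonempty (hG : G.Connected) (u v : V) :
    {x | ∃ p : G.Walk u v, x = (p.edges.map w).sum}.Nonempty := by
  obtain ⟨p⟩ := hG.preconnected u v
  exact ⟨_, p, rfl⟩

lemma wdist_le (hw : ∀ e, 0 ≤ w e) {u v : V} (p : G.Walk u v) :
    wdist G w u v ≤ (p.edges.map w).sum :=
  csInf_le (wdist_bddBelow hw u v) ⟨p, rfl⟩

lemma wdist_nonneg (hG : G.Connected) (hw : ∀ e, 0 ≤ w e) (u v : V) :
    0 ≤ wdist G w u v :=
  le_csInf (wdist_set_nonempty hG u v)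
    (by rintro x ⟨p, rfl⟩; exact walkWeight_nonneg hw p)

lemma wdist_triangle (hG : G.Connected) (hw : ∀ e, 0 ≤ w e) (u x v : V) :
    wdist G w u v ≤ wdist G w u x + wdist G w x v := by
  have key : ∀ (q : G.Walk u x) (r : G.Walk x v),
      wdist G w u v ≤ (q.edges.map w).sum + (r.edges.map w).sum := by
    intro q r
    have := wdist_le hw (q.append r)
    rwa [Walk.edges_append, List.map_append, List.sum_append] at this
  have step1 : ∀ (q : G.Walk u x),
      wdist G w u v - (q.edges.map w).sum ≤ wdist G w x v := by
    intro q
    refine le_csInf (wdist_set_nonempty hG x v) ?_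
    rintro y ⟨r, rfl⟩
    linarith [key q r]
  have step2 : wdist G w u v - wdist G w x v ≤ wdist G w u x := by
    refine le_csInf (wdist_set_nonempty hG u x) ?_
    rintro y ⟨q, rfl⟩
    linarith [step1 q]
  linarith

end Aux

noncomputable def chainW {V : Type*} (G : SimpleGraph V) (w : Sym2 V → ℝ) : V → List V → ℝ
  | _, [] => 0
  | u, a :: l => wdist G w u a + chainW G w a l

section Chain
variable {V : Type*} {G : SimpleGraph V} {w : Sym2 V → ℝ}

lemma chainW_triangle (hG : G.Connected) (hw : ∀ e, 0 ≤ w e) (u v : V) (l : List V) :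
    chainW G w u l ≤ wdist G w u v + chainW G w v l := by
  cases l with
  | nil => simp only [chainW]; linarith [wdist_nonneg hG hw u v]
  | cons a l =>
    simp only [chainW]
    have := wdist_triangle hG hw u v a
    linarith

lemma chainW_dropMid (hG : G.Connected) (hw : ∀ e, 0 ≤ w e) (u x : V) (l₁ l₂ : List V) :
    chainW G w u (l₁ ++ l₂) ≤ chainW G w u (l₁ ++ x :: l₂) := by
  induction l₁ generalizing u with
  | nil => simpa [chainW] using chainW_triangle hG hw u x l₂
  | cons a l₁ ih =>
    simp only [List.cons_append, chainW, List.append_eq]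
    linarith [ih a]

end Chain


lemma walk_chain {V : Type*} {G : SimpleGraph V} {w : Sym2 V → ℝ}
    (hG : G.Connected) (hw : ∀ e, 0 ≤ w e) {u d : V} (p : G.Walk u d) :
    ∀ (S : Set V), (∀ t ∈ S, t ∈ p.support) →
    ∃ L : List V, (u :: L).Nodup ∧ (∀ x ∈ L, x ∈ S) ∧ (∀ t ∈ S, t = u ∨ t ∈ L) ∧
      chainW G w u L ≤ (p.edges.map w).sum := by
  induction p with
  | nil =>
    intro S hS
    refine ⟨[], by simp, by simp, fun t ht => ?_, by simp [chainW]⟩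
    · simpa using hS t ht
  | @cons u v d h p ih =>
    intro S hS
    classical
    obtain ⟨L', hnd', hsub', hcov', hch'⟩ := ih {t ∈ S | t ∈ p.support} (fun t ht => ht.2)
    have hdv : wdist G w u v ≤ w s(u, v) := by
      have := wdist_le hw (Walk.cons h Walk.nil)
      simpa using this
    have hpw : ((Walk.cons h p).edges.map w).sum = w s(u, v) + (p.edges.map w).sum := by
      simp
    set M : List V := if v ∈ S then v :: L' else L' with hM
    have hMnd : M.Nodup := by
      rw [hM]; split_ifs
      · exact hnd'
      · exact hnd'.of_cons
    have hMsub : ∀ x ∈ M, x ∈ S := by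
      intro x hx
      rw [hM] at hx; split_ifs at hx with hv
      · rcases List.mem_cons.mp hx with rfl | hx
        · exact hv
        · exact (hsub' x hx).1
      · exact (hsub' x hx).1
    have hMcov : ∀ t ∈ S, t = u ∨ t ∈ M := by
      intro t ht
      have := hS t ht
      rw [Walk.support_cons] at this
      rcases List.mem_cons.mp this with rfl | hts
      · exact Or.inl rfl
      · have : t = v ∨ t ∈ L' := hcov' t ⟨ht, hts⟩
        rcases this with rfl | htL
        · right; rw [hM]; simp [ht]
        · right; rw [hM]; split_ifs <;> simp [htL]
    have hMch : chainW G w u M ≤ w s(u, v) + (p.edges.map w).sum := by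
      rw [hM]; split_ifs
      · simp only [chainW]; linarith
      · have := chainW_triangle hG hw u v L'
        linarith
    by_cases huM : u ∈ M
    · obtain ⟨l₁, l₂, hMeq⟩ := List.append_of_mem huM
      have hnd2 := hMnd; rw [hMeq] at hnd2
      have hul₁ : u ∉ l₁ := by
        have := (List.nodup_append'.mp hnd2).2.2
        intro hc; exact this hc (List.mem_cons_self)
      have hul₂ : u ∉ l₂ := by
        have := (List.nodup_append'.mp hnd2).2.1
        exact (List.nodup_cons.mp this).1
      have hnd3 : (l₁ ++ l₂).Nodup := by
        refine List.Sublist.nodup ?_ hnd2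
        exact List.Sublist.append_left (List.sublist_cons_self u l₂) l₁
      refine ⟨l₁ ++ l₂, ?_, ?_, ?_, ?_⟩
      · rw [List.nodup_cons]
        refine ⟨by simp [hul₁, hul₂], hnd3⟩
      · intro x hx
        apply hMsub; rw [hMeq]
        rcases List.mem_append.mp hx with hx | hx
        · exact List.mem_append.mpr (Or.inl hx)
        · exact List.mem_append.mpr (Or.inr (List.mem_cons_of_mem _ hx))
      · intro t ht
        rcases hMcov t ht with rfl | htM
        · exact Or.inl rfl
        · by_cases htu : t = u
          · exact Or.inl htu
          · right
            rw [hMeq] at htM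
            rcases List.mem_append.mp htM with hx | hx
            · exact List.mem_append.mpr (Or.inl hx)
            · rcases List.mem_cons.mp hx with rfl | hx
              · exact absurd rfl htu
              · exact List.mem_append.mpr (Or.inr hx)
      · have := chainW_dropMid hG hw u u l₁ l₂
        rw [← hMeq] at this
        rw [hpw]
        exact le_trans this hMch
    · refine ⟨M, ?_, hMsub, hMcov, by rw [hpw]; exact hMch⟩
      rw [List.nodup_cons]; exact ⟨huM, hMnd⟩


lemma isAcyclic_of_label {W : Type*} (A : SimpleGraph W) (f : W → ℕ)
    (hinj : Function.Injective f)
    (hadj : ∀ a b, A.Adj a b → (f a + 1 = f b ∨ f b + 1 = f a)) : A.IsAcyclic := by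
  classical
  intro v c hc
  obtain ⟨m, hm⟩ : ∃ m, m ∈ c.support.argmax f := by
    cases h : c.support.argmax f with
    | none => exact absurd (List.argmax_eq_none.mp h) c.support_ne_nil
    | some m => exact ⟨m, rfl⟩
  have hm_mem : m ∈ c.support := List.argmax_mem hm
  have hmax : ∀ x ∈ c.support, f x ≤ f m := fun x hx => List.le_of_mem_argmax hx hm
  have key : ∀ (c' : A.Walk m m), c'.IsCycle → (∀ x ∈ c'.support, f x ≤ f m) → False := by
    intro c' hc' hmax'
    cases c' with
    | nil => exact Walk.IsCycle.not_of_nil hc'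
    | @cons _ a _ h p =>
      have h3 := hc'.three_le_length
      rw [Walk.length_cons] at h3
      have hlen : 1 ≤ p.length := by omega
      rw [Walk.cons_isCycle_iff] at hc'
      set b := p.getVert (p.length - 1) with hb
      have hbm : A.Adj b m := by
        have := p.adj_getVert_succ (i := p.length - 1) (by omega)
        rwa [Nat.sub_add_cancel hlen, p.getVert_length] at this
      have hbmem : b ∈ p.support :=
        Walk.mem_support_iff_exists_getVert.mpr ⟨p.length - 1, rfl, by omega⟩
      have hamem : a ∈ p.support := p.start_mem_support
      have hfa : f a ≤ f m := hmax' a (by rw [Walk.support_cons]; exact List.mem_cons_of_mem _ hamem)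
      have hfb : f b ≤ f m := hmax' b (by rw [Walk.support_cons]; exact List.mem_cons_of_mem _ hbmem)
      have hfam : f a ≠ f m := fun he => h.ne (hinj he.symm)
      have hfbm : f b ≠ f m := fun he => hbm.ne (hinj he)
      have hma : f m = f a + 1 := by rcases hadj m a h with h' | h' <;> omega
      have hmb : f m = f b + 1 := by rcases hadj b m hbm with h' | h' <;> omega
      have hab : a = b := hinj (by omega)
      have hsub : p.toSubgraph.Adj b m := by
        have := p.toSubgraph_adj_getVert (i := p.length - 1) (by omega)
        rwa [Nat.sub_add_cancel hlen, p.getVert_length] at this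
      have hmem : s(b, m) ∈ p.edges := p.mem_edges_toSubgraph.mp (Subgraph.mem_edgeSet.mpr hsub)
      apply hc'.2
      rwa [← hab, Sym2.eq_swap] at hmem
  have hmax' : ∀ x ∈ (c.rotate m hm_mem).support, f x ≤ f m := by
    intro x hx
    rw [Walk.support_eq_cons] at hx
    rcases List.mem_cons.mp hx with rfl | hx
    · exact le_refl _
    · exact hmax x (List.mem_of_mem_tail (((Walk.support_rotate c m hm_mem).mem_iff).mp hx))
  exact key (c.rotate m hm_mem) (hc.rotate hm_mem) hmax'


noncomputable def subChain {W : Type*} (ω : Sym2 W → ℝ) : W → List W → ℝ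
  | _, [] => 0
  | u, a :: l => ω s(u, a) + subChain ω a l

lemma exists_path_walk {W : Type*} [DecidableEq W] :
    ∀ (l : List W) (u : W), (u :: l).Nodup →
    ∃ (v : W) (q : (⊤ : SimpleGraph W).Walk u v),
      q.support = u :: l ∧ q.IsPath ∧
      (∀ a b : W, q.toSubgraph.Adj a b →
        ((u :: l).idxOf a + 1 = (u :: l).idxOf b ∨
         (u :: l).idxOf b + 1 = (u :: l).idxOf a)) ∧
      ∀ ω : Sym2 W → ℝ, (q.edges.map ω).sum = subChain ω u l := by
  intro l
  induction l with
  | nil =>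
    intro u _
    refine ⟨u, Walk.nil, by simp, by simp, ?_, by simp [subChain]⟩
    intro a b hab
    simp [Walk.toSubgraph] at hab
  | cons a l ih =>
    intro u hnd
    have hnd' : (a :: l).Nodup := hnd.of_cons
    have hunotin : u ∉ a :: l := (List.nodup_cons.mp hnd).1
    have hua : u ≠ a := fun he => hunotin (he ▸ List.mem_cons_self)
    obtain ⟨v, q, hsupp, hpath, hadj, hsum⟩ := ih a hnd'
    have hadj_top : (⊤ : SimpleGraph W).Adj u a := by simp [hua]
    refine ⟨v, Walk.cons hadj_top q, by simp [hsupp], ?_, ?_, ?_⟩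
    · rw [Walk.cons_isPath_iff]
      exact ⟨hpath, by rw [hsupp]; exact hunotin⟩
    · intro x y hxy
      have : ((⊤ : SimpleGraph W).subgraphOfAdj hadj_top ⊔ q.toSubgraph).Adj x y := hxy
      rcases Subgraph.sup_adj.mp this with h1 | h2
      · rw [subgraphOfAdj_adj] at h1
        rcases Sym2.eq_iff.mp h1.symm with ⟨rfl, rfl⟩ | ⟨rfl, rfl⟩
        · left
          rw [List.idxOf_cons_self, List.idxOf_cons_ne _ hua,
            List.idxOf_cons_self]
        · right
          rw [List.idxOf_cons_self, List.idxOf_cons_ne _ hua,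
            List.idxOf_cons_self]
      · have hx : x ∈ a :: l := by
          have := h2.fst_mem
          rwa [q.mem_verts_toSubgraph, hsupp] at this
        have hy : y ∈ a :: l := by
          have := h2.snd_mem
          rwa [q.mem_verts_toSubgraph, hsupp] at this
        have hxu : x ≠ u := fun he => hunotin (he ▸ hx)
        have hyu : y ≠ u := fun he => hunotin (he ▸ hy)
        rw [List.idxOf_cons_ne _ (Ne.symm hxu), List.idxOf_cons_ne _ (Ne.symm hyu)]
        rcases hadj x y h2 with h' | h'
        · left; omega
        · right; omega
    · intro ω
      rw [Walk.edges_cons, List.map_cons, List.sum_cons]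
      simp only [subChain]
      rw [hsum ω]


/-- Every walk in a finite connected graph `G` (nonnegative weights) that starts at
`s ∈ T`, ends at `d ∈ T`, and visits every vertex of the terminal set `T` (`|T| ≥ 2`)
has total weight at least the minimum weight of a spanning tree of the metric
completion of `T`. -/
theorem terminal_walk_weight_ge_mst {V : Type*} [Fintype V]
    (G : SimpleGraph V) (w : Sym2 V → ℝ)
    (hG : G.Connected) (hw : ∀ e, 0 ≤ w e)
    (T : Set V) (hT : 2 ≤ T.ncard)
    (s d : V) (hs : s ∈ T) (hd : d ∈ T)
    (wN : Sym2 ↥T → ℝ) (hwN : ∀ a b : ↥T, wN s(a, b) = wdist G w ↑a ↑b)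
    (H : SimpleGraph ↥T) (hH : IsMST (⊤ : SimpleGraph ↥T) wN H)
    (p : G.Walk s d) (hp : ∀ t ∈ T, t ∈ p.support) :
    treeWeight H wN ≤ (p.edges.map w).sum := by
  classical
  obtain ⟨L, hLnd, hLsub, hLcov, hLch⟩ := walk_chain hG hw p T hp
  -- lift L to a list in ↥T
  set Lsub : List ↥T := L.pmap (fun x hx => (⟨x, hx⟩ : ↥T)) hLsub with hLsubdef
  set l' : List ↥T := ⟨s, hs⟩ :: Lsub with hl'def
  have hl'nd : l'.Nodup := by
    rw [hl'def, List.nodup_cons]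
    constructor
    · intro hmem
      obtain ⟨a, ha, hEq⟩ := List.mem_pmap.mp hmem
      have : a = s := congrArg Subtype.val hEq
      exact (List.nodup_cons.mp hLnd).1 (this ▸ ha)
    · exact List.Nodup.pmap (fun a _ b _ h => congrArg Subtype.val h) (List.nodup_cons.mp hLnd).2
  have hl'cov : ∀ x : ↥T, x ∈ l' := by
    rintro ⟨t, ht⟩
    rcases hLcov t ht with rfl | htL
    · exact List.mem_cons_self
    · exact List.mem_cons_of_mem _ (List.mem_pmap.mpr ⟨t, htL, rfl⟩)
  -- build the path walk in the complete graph on ↥T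
  obtain ⟨v, q, hsupp, hpath, hadjidx, hsum⟩ := exists_path_walk Lsub ⟨s, hs⟩ (hl'def ▸ hl'nd)
  set H' : SimpleGraph ↥T := q.toSubgraph.spanningCoe with hH'def
  have hspan : q.toSubgraph.IsSpanning := by
    intro x
    rw [q.mem_verts_toSubgraph, hsupp]
    exact hl'cov x
  have hH'adj : ∀ a b : ↥T, H'.Adj a b ↔ q.toSubgraph.Adj a b := fun a b => Iff.rfl
  -- connectivity
  have hconn : H'.Connected := by
    rw [connected_iff]
    refine ⟨fun x y => ?_, ⟨⟨s, hs⟩⟩⟩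
    have hr : q.toSubgraph.coe.Reachable ⟨x, hspan x⟩ ⟨y, hspan y⟩ :=
      (q.toSubgraph_connected).preconnected _ _
    have := hr.map (Subgraph.spanningCoeEquivCoeOfSpanning q.toSubgraph hspan).symm.toHom
    simpa using this
  -- acyclicity
  have hacyc : H'.IsAcyclic := by
    apply isAcyclic_of_label H' (fun x => @List.idxOf _ instBEqOfDecidableEq x l')
    · intro x y hxy
      exact (@List.idxOf_inj _ instBEqOfDecidableEq _ _ _ _ (hl'cov x)).mp hxy
    · intro a b hab
      exact hadjidx a b hab
  -- H' is a spanning tree of ⊤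
  have hst : IsSpanningTree (⊤ : SimpleGraph ↥T) H' := ⟨le_top, ⟨hconn, hacyc⟩⟩
  -- treeWeight H' = sum over q.edges
  have hedges : H'.edgeSet = {e | e ∈ q.edges} := by
    ext e
    induction e with
    | _ x y =>
      rw [mem_edgeSet]
      change q.toSubgraph.Adj x y ↔ _
      rw [← Subgraph.mem_edgeSet, q.edgeSet_toSubgraph]
      rfl
  have hnodupE : q.edges.Nodup := hpath.isTrail.edges_nodup
  have htw : treeWeight H' wN = (q.edges.map wN).sum := by
    rw [treeWeight]
    have hfs : (Set.toFinite H'.edgeSet).toFinset = q.edges.toFinset := by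
      ext e
      rw [Set.Finite.mem_toFinset, List.mem_toFinset, hedges]
      rfl
    rw [hfs, List.sum_toFinset _ hnodupE]
  -- subChain = chainW
  have hsc : ∀ (L : List V) (u : V) (hu : u ∈ T) (hL : ∀ x ∈ L, x ∈ T),
      subChain wN ⟨u, hu⟩ (L.pmap (fun x hx => (⟨x, hx⟩ : ↥T)) hL) = chainW G w u L := by
    intro L
    induction L with
    | nil => intro u hu hL; simp [subChain, chainW]
    | cons a L ih =>
      intro u hu hL
      simp only [List.pmap, subChain, chainW]
      rw [hwN, ih a (hL a (List.mem_cons_self)) (fun x hx => hL x (List.mem_cons_of_mem _ hx))]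
  calc treeWeight H wN ≤ treeWeight H' wN := hH.2 H' hst
    _ = (q.edges.map wN).sum := htw
    _ = subChain wN ⟨s, hs⟩ Lsub := hsum wN
    _ = chainW G w s L := hsc L s hs hLsub
    _ ≤ (p.edges.map w).sum := hLch
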